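/- Let A and G be d×d symmetric positive-definite real matrices with A ⪯ G ⪯ ηA for some η ≥ 1, and let U be any d×k real matrix. Define G₊ = G − (G−A)U(Uᵀ(G−A)U)†Uᵀ(G−A), where † denotes the Moore–Penrose pseudoinverse. Then A ⪯ G₊ ⪯ ηA. -/

import Mathlib

open Matrix

/-- The four Penrose conditions characterizing the Moore–Penrose pseudoinverse. -/
def IsMoorePenrose {m n : Type*} [Fintype m] [Fintype n]
    (S : Matrix m n ℝ) (P : Matrix n m ℝ) : Prop :=
  S * P * S = S ∧ P * S * P = P ∧ (S * P)ᵀ = S * P ∧ (P * S)ᵀ = P * S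

/-- **SR-k update preserves the Loewner bounds** (Lemma 3.2):
if `A ⪯ G ⪯ η A` then `A ⪯ G₊ ⪯ η A` where
`G₊ = G − (G−A)U(Uᵀ(G−A)U)†Uᵀ(G−A)`. -/
theorem srk_update_loewner_bounds {d k : ℕ}
    (A G : Matrix (Fin d) (Fin d) ℝ) (hA : A.PosDef) (hG : G.PosDef)
    (η : ℝ) (hη : 1 ≤ η)
    (hAG : (G - A).PosSemidef) (hGη : (η • A - G).PosSemidef)
    (U : Matrix (Fin d) (Fin k) ℝ)
    (P : Matrix (Fin k) (Fin k) ℝ)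
    (hP : IsMoorePenrose (Uᵀ * (G - A) * U) P) :
    ((G - (G - A) * U * P * Uᵀ * (G - A)) - A).PosSemidef ∧
      (η • A - (G - (G - A) * U * P * Uᵀ * (G - A))).PosSemidef := by
  obtain ⟨h1, h2, h3, h4⟩ := hP
  set E : Matrix (Fin d) (Fin d) ℝ := G - A with hEdef
  set S : Matrix (Fin k) (Fin k) ℝ := Uᵀ * E * U with hSdef
  clear_value S
  clear_value E
  have hEsym : Eᵀ = E := by
    have := hAG.isHermitian
    rwa [IsHermitian, conjTranspose_eq_transpose_of_trivial] at this
  have hSsym : Sᵀ = S := by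
    rw [hSdef, transpose_mul, transpose_mul, transpose_transpose, hEsym, Matrix.mul_assoc]
  -- transposed Penrose conditions
  have h1t : S * Pᵀ * S = S := by
    have h := congrArg Matrix.transpose h1
    rw [transpose_mul, transpose_mul, hSsym, ← Matrix.mul_assoc] at h
    exact h
  have h3' : Pᵀ * S = S * P := by
    have : (S * P)ᵀ = Pᵀ * Sᵀ := transpose_mul S P
    rw [hSsym] at this
    rw [← this, h3]
  have h4' : S * Pᵀ = P * S := by
    have : (P * S)ᵀ = Sᵀ * Pᵀ := transpose_mul P S
    rw [hSsym] at this
    rw [← this, h4]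
  -- S and P commute
  have hcomm : S * P = P * S := by
    calc S * P = (S * Pᵀ * S) * P := by rw [h1t]
      _ = (S * Pᵀ) * (S * P) := by rw [Matrix.mul_assoc]
      _ = (P * S) * (S * P) := by rw [h4']
      _ = (P * S)ᵀ * (S * P)ᵀ := by rw [h4, h3]
      _ = ((S * P) * (P * S))ᵀ := (transpose_mul _ _).symm
      _ = ((S * P) * (S * Pᵀ))ᵀ := by rw [h4']
      _ = ((S * P * S) * Pᵀ)ᵀ := by simp only [Matrix.mul_assoc]
      _ = (S * Pᵀ)ᵀ := by rw [h1]
      _ = (P * S)ᵀ := by rw [h4']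
      _ = P * S := h4
  have hq : Pᵀ * S * Pᵀ = Pᵀ := by
    have h := congrArg Matrix.transpose h2
    rw [transpose_mul, transpose_mul, hSsym, ← Matrix.mul_assoc] at h
    exact h
  have hPsym : Pᵀ = P := by
    have : P = Pᵀ := by
      calc P = P * S * P := h2.symm
        _ = P * (S * P) := by rw [Matrix.mul_assoc]
        _ = P * (P * S) := by rw [hcomm]
        _ = P * (S * Pᵀ) := by rw [h4']
        _ = (P * S) * Pᵀ := by rw [Matrix.mul_assoc]
        _ = (S * P) * Pᵀ := by rw [hcomm]
        _ = (Pᵀ * S) * Pᵀ := by rw [h3']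
        _ = Pᵀ := hq
    exact this.symm
  -- S is PSD
  have hSpsd : S.PosSemidef := by
    have h := hAG.conjTranspose_mul_mul_same U
    rw [conjTranspose_eq_transpose_of_trivial, ← hSdef] at h
    exact h
  -- P is PSD
  have hPpsd : P.PosSemidef := by
    have := hSpsd.conjTranspose_mul_mul_same P
    rw [conjTranspose_eq_transpose_of_trivial, hPsym, h2] at this
    exact this
  -- square root of E
  set C : Matrix (Fin d) (Fin d) ℝ := (open scoped MatrixOrder in CFC.sqrt E) with hCdef
  have hCC : C * C = E := by
    open scoped MatrixOrder in exact CFC.sqrt_mul_sqrt_self E hAG.nonneg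
  have hCsym : Cᵀ = C := by
    have := (open scoped MatrixOrder in (CFC.sqrt_nonneg E).posSemidef).isHermitian
    rwa [IsHermitian, conjTranspose_eq_transpose_of_trivial] at this
  clear_value C
  set W : Matrix (Fin d) (Fin k) ℝ := C * U with hWdef
  clear_value W
  have hWW : Wᵀ * W = S := by
    rw [hWdef, transpose_mul, hCsym, hSdef, ← hCC]
    simp only [Matrix.mul_assoc]
  set Q : Matrix (Fin d) (Fin d) ℝ := W * P * Wᵀ with hQdef
  clear_value Q
  have hQsym : Qᵀ = Q := by
    rw [hQdef]
    simp only [transpose_mul, transpose_transpose, hPsym, Matrix.mul_assoc]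
  have hQidem : Q * Q = Q := by
    rw [hQdef]
    calc (W * P * Wᵀ) * (W * P * Wᵀ) = W * (P * S * P) * Wᵀ := by
          rw [← hWW]; simp only [Matrix.mul_assoc]
      _ = W * P * Wᵀ := by rw [h2]
  have hIQ : (1 - Q).PosSemidef := by
    have h := posSemidef_conjTranspose_mul_self (1 - Q)
    have heq : (1 - Q)ᴴ * (1 - Q) = 1 - Q := by
      rw [conjTranspose_eq_transpose_of_trivial, transpose_sub, transpose_one, hQsym]
      calc (1 - Q) * (1 - Q) = 1 - Q - Q + Q * Q := by noncomm_ring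
        _ = 1 - Q := by rw [hQidem]; noncomm_ring
    rwa [heq] at h
  have hQpsd : Q.PosSemidef := by
    have := hPpsd.mul_mul_conjTranspose_same W
    rwa [conjTranspose_eq_transpose_of_trivial, ← hQdef] at this
  -- key algebraic identities
  have hM : E * U * P * Uᵀ * E = C * Q * Cᵀ := by
    rw [hQdef, hWdef, transpose_mul, hCsym, ← hCC]
    simp only [Matrix.mul_assoc]
  have hM2 : E - E * U * P * Uᵀ * E = C * (1 - Q) * Cᵀ := by
    rw [hM, hCsym, Matrix.mul_sub, Matrix.sub_mul, Matrix.mul_one, hCC]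
  constructor
  · have hp := hIQ.mul_mul_conjTranspose_same C
    rw [conjTranspose_eq_transpose_of_trivial, ← hM2] at hp
    have : (G - E * U * P * Uᵀ * E) - A = E - E * U * P * Uᵀ * E := by
      rw [hEdef]; noncomm_ring
    rwa [this]
  · have hp := hQpsd.mul_mul_conjTranspose_same C
    rw [conjTranspose_eq_transpose_of_trivial, ← hM] at hp
    have := hGη.add hp
    have heq : η • A - G + E * U * P * Uᵀ * E = η • A - (G - E * U * P * Uᵀ * E) := by
      noncomm_ring
    rwa [heq] at this
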